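/- Let 1 < p < 5, α > 0, β > 0 and γ, μ > 0. Then the infimum J(γ, μ) is finite (J(γ, μ) > −∞), and every minimizing sequence for J(γ, μ) is bounded in H¹(ℝ;ℂ³). -/

import Mathlib

open MeasureTheory Filter Complex

noncomputable section

/-- Membership in `H¹(ℝ, ℂ)` (modeled via the classical derivative). -/
def InH1 (f : ℝ → ℂ) : Prop :=
  MemLp f 2 (volume : Measure ℝ) ∧ Differentiable ℝ f ∧
    MemLp (deriv f) 2 (volume : Measure ℝ)

/-- `‖f‖_{L²}²`. -/
def massSq (f : ℝ → ℂ) : ℝ := ∫ x : ℝ, ‖f x‖ ^ 2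

/-- `‖∂ₓ f‖_{L²}²`. -/
def kinetic (f : ℝ → ℂ) : ℝ := ∫ x : ℝ, ‖deriv f x‖ ^ 2

/-- `∫ |f|^{p+1}`. -/
def potential (p : ℝ) (f : ℝ → ℂ) : ℝ := ∫ x : ℝ, ‖f x‖ ^ (p + 1)

/-- `Re ∫ u₁ u₂ (conj u₃)`. -/
def interaction (u1 u2 u3 : ℝ → ℂ) : ℝ :=
  ∫ x : ℝ, (u1 x * u2 x * (starRingEnd ℂ) (u3 x)).re

/-- The energy functional `E`. -/
def energy (p α β : ℝ) (u1 u2 u3 : ℝ → ℂ) : ℝ :=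
  ((1 / 2) * kinetic u1 - β / (p + 1) * potential p u1)
    + ((1 / 2) * kinetic u2 - β / (p + 1) * potential p u2)
    + ((1 / 2) * kinetic u3 - β / (p + 1) * potential p u3)
    - α * interaction u1 u2 u3

/-- The set of energies of admissible triples for `I(γ, μ, s)`. -/
def constraintSet (p α β γ μ s : ℝ) : Set ℝ :=
  { e | ∃ u1 u2 u3 : ℝ → ℂ, InH1 u1 ∧ InH1 u2 ∧ InH1 u3 ∧
      massSq u1 = γ ∧ massSq u2 = μ ∧ massSq u3 = s ∧ e = energy p α β u1 u2 u3 }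

/-- `I(γ, μ, s)`. -/
def Iinf (p α β γ μ s : ℝ) : ℝ := sInf (constraintSet p α β γ μ s)

/-- A minimizing sequence for `I(γ, μ, s)`. -/
def MinimizingSeq (p α β γ μ s : ℝ) (u1 u2 u3 : ℕ → ℝ → ℂ) : Prop :=
  (∀ n, InH1 (u1 n) ∧ InH1 (u2 n) ∧ InH1 (u3 n)) ∧
  Tendsto (fun n => massSq (u1 n)) atTop (nhds γ) ∧
  Tendsto (fun n => massSq (u2 n)) atTop (nhds μ) ∧
  Tendsto (fun n => massSq (u3 n)) atTop (nhds s) ∧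
  Tendsto (fun n => energy p α β (u1 n) (u2 n) (u3 n)) atTop
    (nhds (Iinf p α β γ μ s))

/-- `∫_{y-r}^{y+r} (|u₁|² + |u₂|² + |u₃|²)`. -/
def localMass (u1 u2 u3 : ℝ → ℂ) (y r : ℝ) : ℝ :=
  ∫ x in Set.Icc (y - r) (y + r), (‖u1 x‖ ^ 2 + ‖u2 x‖ ^ 2 + ‖u3 x‖ ^ 2)

/-- `λ` is the concentration parameter of the sequence. -/
def IsConcentration (u1 u2 u3 : ℕ → ℝ → ℂ) (lam : ℝ) : Prop :=
  Tendsto (fun r : ℝ =>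
      limsup (fun n => ⨆ y : ℝ, localMass (u1 n) (u2 n) (u3 n) y r) atTop)
    atTop (nhds lam)

/-- The squared `H¹` norm. -/
def H1normSq (f : ℝ → ℂ) : ℝ := massSq f + kinetic f

/-- The `H¹(ℝ; ℂ³)` distance between two triples. -/
def H1dist3 (u v : (ℝ → ℂ) × (ℝ → ℂ) × (ℝ → ℂ)) : ℝ :=
  Real.sqrt (H1normSq (u.1 - v.1) + H1normSq (u.2.1 - v.2.1)
    + H1normSq (u.2.2 - v.2.2))

/-- The set `𝒢_{γ,μ,s}` of minimizers of `I(γ, μ, s)`. -/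
def GSet (p α β γ μ s : ℝ) : Set ((ℝ → ℂ) × (ℝ → ℂ) × (ℝ → ℂ)) :=
  { u | InH1 u.1 ∧ InH1 u.2.1 ∧ InH1 u.2.2 ∧
      massSq u.1 = γ ∧ massSq u.2.1 = μ ∧ massSq u.2.2 = s ∧
      energy p α β u.1 u.2.1 u.2.2 = Iinf p α β γ μ s }

/-- Symmetric decreasing rearrangement of a real function:
`f*(x) = |{t > 0 : x ∈ I_t}|` where `I_t` is the open interval centered at `0`
of length `|{ z : |f z| > t }|`. -/
def symmRearr (f : ℝ → ℝ) (x : ℝ) : ℝ :=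
  (volume { t : ℝ | 0 < t ∧
      ENNReal.ofReal (2 * |x|) < volume { z : ℝ | t < |f z| } }).toReal

/-- The constraint set for `J(γ, μ)` (with `Q₁(u) = γ`, `Q₂(u) = μ`). -/
def JconstraintSet (p α β γ μ : ℝ) : Set ℝ :=
  { e | ∃ u1 u2 u3 : ℝ → ℂ, InH1 u1 ∧ InH1 u2 ∧ InH1 u3 ∧
      massSq u1 + massSq u3 = γ ∧ massSq u2 + massSq u3 = μ ∧
      e = energy p α β u1 u2 u3 }

/-- `J(γ, μ)`. -/
def Jinf (p α β γ μ : ℝ) : ℝ := sInf (JconstraintSet p α β γ μ)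

/-- A minimizing sequence for `J(γ, μ)`. -/
def JMinimizingSeq (p α β γ μ : ℝ) (u1 u2 u3 : ℕ → ℝ → ℂ) : Prop :=
  (∀ n, InH1 (u1 n) ∧ InH1 (u2 n) ∧ InH1 (u3 n)) ∧
  Tendsto (fun n => massSq (u1 n) + massSq (u3 n)) atTop (nhds γ) ∧
  Tendsto (fun n => massSq (u2 n) + massSq (u3 n)) atTop (nhds μ) ∧
  Tendsto (fun n => energy p α β (u1 n) (u2 n) (u3 n)) atTop
    (nhds (Jinf p α β γ μ))

/-- The set `ℳ_{γ,μ}` of minimizers of `J(γ, μ)`. -/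
def MSet (p α β γ μ : ℝ) : Set ((ℝ → ℂ) × (ℝ → ℂ) × (ℝ → ℂ)) :=
  { u | InH1 u.1 ∧ InH1 u.2.1 ∧ InH1 u.2.2 ∧
      massSq u.1 + massSq u.2.2 = γ ∧ massSq u.2.1 + massSq u.2.2 = μ ∧
      energy p α β u.1 u.2.1 u.2.2 = Jinf p α β γ μ }

end



lemma cs_int {F G : ℝ → ℂ} (hF : MemLp F 2 (volume : Measure ℝ))
    (hG : MemLp G 2 (volume : Measure ℝ)) :
    Integrable (fun x => ‖F x‖ * ‖G x‖) volume := by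
  have h : MemLp ((fun x => ‖F x‖) • (fun x => ‖G x‖)) 1 (volume : Measure ℝ) :=
    (hG.norm).smul (hF.norm) (hpqr := ⟨by rw [inv_one, ENNReal.inv_two_add_inv_two]⟩)
  exact memLp_one_iff_integrable.mp h

lemma cs_le {F G : ℝ → ℂ} (hF : MemLp F 2 (volume : Measure ℝ))
    (hG : MemLp G 2 (volume : Measure ℝ)) :
    ∫ x, ‖F x‖ * ‖G x‖ ≤
      Real.sqrt (∫ x, ‖F x‖ ^ 2) * Real.sqrt (∫ x, ‖G x‖ ^ 2) := by
  have hpq : Real.HolderConjugate 2 2 := Real.holderConjugate_iff.mpr ⟨one_lt_two, by norm_num⟩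
  have h2 : (ENNReal.ofReal 2) = 2 := by norm_num
  have h := integral_mul_norm_le_Lp_mul_Lq (μ := volume) hpq (h2 ▸ hF) (h2 ▸ hG)
  have e1 : ∀ (H : ℝ → ℂ), (∫ x, ‖H x‖ ^ (2:ℝ)) = ∫ x, ‖H x‖ ^ 2 := by
    intro H; congr 1; funext x; rw [Real.rpow_two]
  rw [e1, e1] at h
  rw [Real.sqrt_eq_rpow, Real.sqrt_eq_rpow]
  exact h

noncomputable section
open MeasureTheory Filter Complex

lemma massSq_nonneg (f : ℝ → ℂ) : 0 ≤ massSq f :=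
  integral_nonneg fun x => by positivity

lemma kinetic_nonneg (f : ℝ → ℂ) : 0 ≤ kinetic f :=
  integral_nonneg fun x => by positivity

lemma sup_bound {f : ℝ → ℂ} (hf : InH1 f) (x : ℝ) :
    ‖f x‖ ^ 2 ≤ 2 * (Real.sqrt (massSq f) * Real.sqrt (kinetic f)) := by
  obtain ⟨hf2, hfd, hfd2⟩ := hf
  set D : ℝ → ℝ := fun y =>
    (deriv f y).re * (f y).re + (f y).re * (deriv f y).re
      + ((deriv f y).im * (f y).im + (f y).im * (deriv f y).im) with hD
  have hnorm : ∀ w : ℂ, ‖w‖ ^ 2 = w.re * w.re + w.im * w.im := fun w => by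
    rw [← Complex.normSq_apply, ← Complex.sq_norm]
  have hre : ∀ y, HasDerivAt (fun z => (f z).re) ((deriv f y).re) y := fun y =>
    (Complex.reCLM.hasFDerivAt.comp_hasDerivAt y (hfd y).hasDerivAt)
  have him : ∀ y, HasDerivAt (fun z => (f z).im) ((deriv f y).im) y := fun y =>
    (Complex.imCLM.hasFDerivAt.comp_hasDerivAt y (hfd y).hasDerivAt)
  have hgd : ∀ y, HasDerivAt (fun z => ‖f z‖ ^ 2) (D y) y := fun y => by
    have hfun : (fun z => ‖f z‖ ^ 2) = fun z => (f z).re * (f z).re + (f z).im * (f z).im :=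
      funext fun z => hnorm (f z)
    rw [hfun]
    exact ((hre y).mul (hre y)).add ((him y).mul (him y))
  have hDbound : ∀ y, ‖D y‖ ≤ 2 * (‖f y‖ * ‖deriv f y‖) := fun y => by
    have h1 : D y = 2 * ((starRingEnd ℂ) (f y) * deriv f y).re := by
      simp [hD, Complex.mul_re]; ring
    rw [h1]
    rw [Real.norm_eq_abs, abs_mul, _root_.abs_two]
    have h2 : |((starRingEnd ℂ) (f y) * deriv f y).re| ≤ ‖f y‖ * ‖deriv f y‖ := by
      calc |((starRingEnd ℂ) (f y) * deriv f y).re| ≤ ‖(starRingEnd ℂ) (f y) * deriv f y‖ :=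
          Complex.abs_re_le_norm _
        _ = ‖f y‖ * ‖deriv f y‖ := by
          rw [norm_mul, Complex.norm_conj]
    nlinarith [h2]
  have hint_ff' : Integrable (fun y => ‖f y‖ * ‖deriv f y‖) volume := cs_int hf2 hfd2
  have hDmeas : AEStronglyMeasurable D volume := by
    have h1 : AEStronglyMeasurable f volume := hfd.continuous.aestronglyMeasurable
    have h2 := hfd2.1
    exact ((h2.re.mul h1.re).add (h1.re.mul h2.re)).add ((h2.im.mul h1.im).add (h1.im.mul h2.im))
  have hD_int : Integrable D volume := by
    refine (hint_ff'.const_mul 2).mono' hDmeas (Eventually.of_forall fun y => ?_)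
    simpa using hDbound y
  have hg_int : Integrable (fun y => ‖f y‖ ^ 2) volume := by
    have := cs_int hf2 hf2
    simpa [pow_two] using this
  have hDnorm : ∫ y, ‖D y‖ ≤ 2 * (Real.sqrt (massSq f) * Real.sqrt (kinetic f)) := by
    calc ∫ y, ‖D y‖ ≤ ∫ y, 2 * (‖f y‖ * ‖deriv f y‖) :=
        integral_mono hD_int.norm (hint_ff'.const_mul 2) hDbound
      _ = 2 * ∫ y, ‖f y‖ * ‖deriv f y‖ := integral_const_mul 2 _
      _ ≤ 2 * (Real.sqrt (massSq f) * Real.sqrt (kinetic f)) := by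
        have := cs_le hf2 hfd2
        unfold massSq kinetic
        linarith
  have key : ∀ ε : ℝ, 0 < ε → ‖f x‖ ^ 2 ≤ (∫ y, ‖D y‖) + ε := by
    intro ε hε
    have hex : ∃ a, a ≤ x ∧ ‖f a‖ ^ 2 < ε := by
      by_contra hcon
      push_neg at hcon
      have hci : Integrable (fun _ : ℝ => ε) (volume.restrict (Set.Iic x)) := by
        refine (hg_int.restrict).mono' aestronglyMeasurable_const ?_
        refine (ae_restrict_iff' measurableSet_Iic).2 (Eventually.of_forall fun a ha => ?_)
        rw [Real.norm_eq_abs, abs_of_pos hε]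
        exact hcon a ha
      rw [integrable_const_iff] at hci
      rcases hci with h | h
      · exact absurd h (ne_of_gt hε)
      · rw [isFiniteMeasure_restrict, Real.volume_Iic] at h
        exact absurd h (by simp)
    obtain ⟨a, hax, hga⟩ := hex
    have ftc : ∫ y in a..x, D y = ‖f x‖ ^ 2 - ‖f a‖ ^ 2 :=
      intervalIntegral.integral_eq_sub_of_hasDerivAt (fun y _ => hgd y)
        hD_int.intervalIntegrable
    have hbd : ∫ y in a..x, D y ≤ ∫ y, ‖D y‖ := by
      calc ∫ y in a..x, D y ≤ ‖∫ y in a..x, D y‖ := le_abs_self _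
        _ ≤ ∫ y in Set.Ioc a x, ‖D y‖ := by
          simpa [intervalIntegral.integral_of_le hax] using
            intervalIntegral.norm_integral_le_integral_norm (f := D) (μ := volume) hax
        _ ≤ ∫ y, ‖D y‖ :=
          setIntegral_le_integral hD_int.norm (Eventually.of_forall fun y => norm_nonneg _)
    rw [ftc] at hbd
    linarith
  have := le_of_forall_pos_le_add key
  linarith

lemma int_sq {f : ℝ → ℂ} (hf2 : MemLp f 2 (volume : Measure ℝ)) :
    Integrable (fun y => ‖f y‖ ^ 2) volume := by
  simpa [pow_two] using cs_int hf2 hf2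

lemma potential_le {p : ℝ} (hp : 1 < p) {f : ℝ → ℂ} (hf : InH1 f) :
    potential p f ≤
      (2 * (Real.sqrt (massSq f) * Real.sqrt (kinetic f))) ^ ((p - 1) / 2) * massSq f := by
  set S2 := 2 * (Real.sqrt (massSq f) * Real.sqrt (kinetic f)) with hS2
  have hS2nn : 0 ≤ S2 := by positivity
  have hb := sup_bound hf
  have hpt : ∀ x, ‖f x‖ ^ (p + 1) ≤ S2 ^ ((p - 1) / 2) * ‖f x‖ ^ 2 := fun x => by
    have h0 : (0:ℝ) ≤ ‖f x‖ := norm_nonneg _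
    have e1 : (‖f x‖ ^ 2 : ℝ) = ‖f x‖ ^ (2:ℝ) := (Real.rpow_natCast _ 2).symm ▸ by norm_num
    have e : ‖f x‖ ^ (p + 1) = (‖f x‖ ^ 2) ^ ((p - 1) / 2) * ‖f x‖ ^ 2 := by
      rw [e1, ← Real.rpow_mul h0,
        ← Real.rpow_add_of_nonneg h0 (by linarith) (by norm_num : (0:ℝ) ≤ 2)]
      congr 1
      ring
    rw [e]
    exact mul_le_mul_of_nonneg_right
      (Real.rpow_le_rpow (by positivity) (hb x) (by linarith)) (by positivity)
  have hint : Integrable (fun x => S2 ^ ((p - 1) / 2) * ‖f x‖ ^ 2) volume :=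
    (int_sq hf.1).const_mul _
  calc potential p f ≤ ∫ x, S2 ^ ((p - 1) / 2) * ‖f x‖ ^ 2 := by
        refine integral_mono_of_nonneg (Eventually.of_forall fun x => ?_) hint
          (Eventually.of_forall hpt)
        positivity
    _ = S2 ^ ((p - 1) / 2) * massSq f := integral_const_mul _ _

lemma interaction_le {u1 u2 u3 : ℝ → ℂ} (h1 : InH1 u1) (h2 : InH1 u2) (h3 : InH1 u3) :
    |interaction u1 u2 u3| ≤
      Real.sqrt (2 * (Real.sqrt (massSq u1) * Real.sqrt (kinetic u1)))
        * (Real.sqrt (massSq u2) * Real.sqrt (massSq u3)) := by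
  set S1 := Real.sqrt (2 * (Real.sqrt (massSq u1) * Real.sqrt (kinetic u1))) with hS1
  have hu1b : ∀ x, ‖u1 x‖ ≤ S1 := fun x => by
    calc ‖u1 x‖ = Real.sqrt (‖u1 x‖ ^ 2) := (Real.sqrt_sq (norm_nonneg _)).symm
      _ ≤ S1 := Real.sqrt_le_sqrt (sup_bound h1 x)
  have hptw : ∀ x, ‖(u1 x * u2 x * (starRingEnd ℂ) (u3 x)).re‖
      ≤ S1 * (‖u2 x‖ * ‖u3 x‖) := fun x => by
    rw [Real.norm_eq_abs]
    calc |(u1 x * u2 x * (starRingEnd ℂ) (u3 x)).re|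
        ≤ ‖u1 x * u2 x * (starRingEnd ℂ) (u3 x)‖ := Complex.abs_re_le_norm _
      _ = ‖u1 x‖ * ‖u2 x‖ * ‖u3 x‖ := by rw [norm_mul, norm_mul, Complex.norm_conj]
      _ ≤ S1 * (‖u2 x‖ * ‖u3 x‖) := by
          rw [mul_assoc]
          exact mul_le_mul_of_nonneg_right (hu1b x) (by positivity)
  have hint23 := cs_int h2.1 h3.1
  calc |interaction u1 u2 u3|
      ≤ ∫ x, ‖(u1 x * u2 x * (starRingEnd ℂ) (u3 x)).re‖ := by
        rw [← Real.norm_eq_abs]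
        exact norm_integral_le_integral_norm _
    _ ≤ ∫ x, S1 * (‖u2 x‖ * ‖u3 x‖) := by
        refine integral_mono_of_nonneg (Eventually.of_forall fun x => norm_nonneg _)
          (hint23.const_mul S1) (Eventually.of_forall hptw)
    _ = S1 * ∫ x, ‖u2 x‖ * ‖u3 x‖ := integral_const_mul _ _
    _ ≤ S1 * (Real.sqrt (massSq u2) * Real.sqrt (massSq u3)) :=
        mul_le_mul_of_nonneg_left (cs_le h2.1 h3.1) (Real.sqrt_nonneg _)

lemma young_aux {θ : ℝ} (hθ0 : 0 < θ) (hθ1 : θ < 1) {C ε : ℝ} (hC : 0 ≤ C) (hε : 0 < ε) :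
    ∃ c : ℝ, 0 ≤ c ∧ ∀ t : ℝ, 0 ≤ t → C * t ^ θ ≤ ε * t + c := by
  have base : ∀ s : ℝ, 0 ≤ s → s ^ θ ≤ 1 + s := fun s hs => by
    rcases le_total s 1 with h | h
    · have := Real.rpow_le_one hs h hθ0.le
      linarith
    · have h2 : s ^ θ ≤ s ^ (1:ℝ) := Real.rpow_le_rpow_of_exponent_le h hθ1.le
      rw [Real.rpow_one] at h2
      linarith
  set C' := C + 1 with hC'
  have hC'0 : 0 < C' := by linarith
  set lam := (ε / C') ^ ((θ - 1)⁻¹) with hlam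
  have hlam0 : 0 < lam := Real.rpow_pos_of_pos (div_pos hε hC'0) _
  have hkey : lam ^ (θ - 1) = ε / C' := by
    rw [hlam]
    exact Real.rpow_inv_rpow (le_of_lt (div_pos hε hC'0)) (by linarith)
  refine ⟨C * lam ^ θ, by positivity, fun t ht => ?_⟩
  have h1 : t ^ θ ≤ lam ^ θ + lam ^ (θ - 1) * t := by
    have h2 : (t / lam) ^ θ ≤ 1 + t / lam := base _ (by positivity)
    have h3 : t ^ θ = lam ^ θ * (t / lam) ^ θ := by
      rw [Real.div_rpow ht hlam0.le]
      field_simp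
    have h4 : lam ^ (θ - 1) = lam ^ θ / lam := by
      rw [Real.rpow_sub hlam0, Real.rpow_one]
    rw [h3, h4]
    have h5 : lam ^ θ * (t / lam) ^ θ ≤ lam ^ θ * (1 + t / lam) :=
      mul_le_mul_of_nonneg_left h2 (by positivity)
    calc lam ^ θ * (t / lam) ^ θ ≤ lam ^ θ * (1 + t / lam) := h5
      _ = lam ^ θ + lam ^ θ / lam * t := by field_simp
  have h6 : C * lam ^ (θ - 1) ≤ ε := by
    calc C * lam ^ (θ - 1) ≤ C' * lam ^ (θ - 1) := by
          have : (0:ℝ) ≤ lam ^ (θ - 1) := by positivity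
          nlinarith
      _ = ε := by rw [hkey]; field_simp
  calc C * t ^ θ ≤ C * (lam ^ θ + lam ^ (θ - 1) * t) :=
        mul_le_mul_of_nonneg_left h1 hC
    _ = C * lam ^ (θ - 1) * t + C * lam ^ θ := by ring
    _ ≤ ε * t + C * lam ^ θ := by nlinarith [h6, ht]

set_option maxHeartbeats 1000000 in
lemma energy_lower {p α β : ℝ} (hp : 1 < p) (hp5 : p < 5) (hα : 0 < α) (hβ : 0 < β)
    (B : ℝ) (hB : 0 ≤ B) :
    ∃ C : ℝ, 0 ≤ C ∧ ∀ u1 u2 u3 : ℝ → ℂ, InH1 u1 → InH1 u2 → InH1 u3 →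
      massSq u1 ≤ B → massSq u2 ≤ B → massSq u3 ≤ B →
      (kinetic u1 + kinetic u2 + kinetic u3) / 4 - C ≤ energy p α β u1 u2 u3 := by
  have hp1 : (0:ℝ) < p + 1 := by linarith
  set θ : ℝ := (p - 1) / 4 with hθ
  have hθ0 : 0 < θ := by rw [hθ]; linarith
  have hθ1 : θ < 1 := by rw [hθ]; linarith
  set A : ℝ := (2 * Real.sqrt B) ^ ((p - 1) / 2) with hA
  have hA0 : 0 ≤ A := by positivity
  set C1 : ℝ := β / (p + 1) * (A * B) with hC1
  have hC10 : 0 ≤ C1 := by positivity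
  set C2 : ℝ := α * (Real.sqrt (2 * Real.sqrt B) * B) with hC2
  have hC20 : 0 ≤ C2 := by positivity
  obtain ⟨c1, hc10, hc1⟩ := young_aux hθ0 hθ1 hC10 (show (0:ℝ) < 1/8 by norm_num)
  obtain ⟨c2, hc20, hc2⟩ := young_aux (show (0:ℝ) < 1/4 by norm_num)
    (show (1:ℝ)/4 < 1 by norm_num) hC20 (show (0:ℝ) < 1/8 by norm_num)
  refine ⟨3 * c1 + c2, by linarith, fun u1 u2 u3 h1 h2 h3 hm1 hm2 hm3 => ?_⟩
  -- potential bounds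
  have hpotb : ∀ u : ℝ → ℂ, InH1 u → massSq u ≤ B →
      potential p u ≤ A * (kinetic u) ^ θ * B := by
    intro u hu hm
    have hM0 := massSq_nonneg u
    have hK0 := kinetic_nonneg u
    have h0 := potential_le hp hu
    have e1 : 2 * (Real.sqrt (massSq u) * Real.sqrt (kinetic u))
        = (2 * Real.sqrt (massSq u)) * Real.sqrt (kinetic u) := by ring
    have e2 : ((2 * Real.sqrt (massSq u)) * Real.sqrt (kinetic u)) ^ ((p - 1) / 2)
        = (2 * Real.sqrt (massSq u)) ^ ((p - 1) / 2)
          * (Real.sqrt (kinetic u)) ^ ((p - 1) / 2) :=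
      Real.mul_rpow (by positivity) (Real.sqrt_nonneg _)
    have e3 : (Real.sqrt (kinetic u)) ^ ((p - 1) / 2) = (kinetic u) ^ θ := by
      rw [Real.sqrt_eq_rpow, ← Real.rpow_mul hK0, hθ]
      congr 1
      ring
    have e4 : (2 * Real.sqrt (massSq u)) ^ ((p - 1) / 2) ≤ A := by
      rw [hA]
      refine Real.rpow_le_rpow (by positivity) ?_ (by linarith)
      have := Real.sqrt_le_sqrt hm
      linarith
    calc potential p u
        ≤ (2 * (Real.sqrt (massSq u) * Real.sqrt (kinetic u))) ^ ((p - 1) / 2) * massSq u := h0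
      _ = (2 * Real.sqrt (massSq u)) ^ ((p - 1) / 2) * (kinetic u) ^ θ * massSq u := by
          rw [e1, e2, e3]
      _ ≤ A * (kinetic u) ^ θ * B := by
          have h5 : (0:ℝ) ≤ (kinetic u) ^ θ := by positivity
          have h6 : (2 * Real.sqrt (massSq u)) ^ ((p - 1) / 2) * (kinetic u) ^ θ
              ≤ A * (kinetic u) ^ θ := mul_le_mul_of_nonneg_right e4 h5
          have h8 := mul_le_mul_of_nonneg_right h6 hM0
          have h9 := mul_le_mul_of_nonneg_left hm (mul_nonneg hA0 h5)
          calc (2 * Real.sqrt (massSq u)) ^ ((p - 1) / 2) * (kinetic u) ^ θ * massSq u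
              ≤ A * (kinetic u) ^ θ * massSq u := h8
            _ ≤ A * (kinetic u) ^ θ * B := by
                have := mul_le_mul_of_nonneg_left hm (mul_nonneg hA0 h5)
                calc A * (kinetic u) ^ θ * massSq u = A * (kinetic u) ^ θ * massSq u := rfl
                  _ ≤ A * (kinetic u) ^ θ * B :=
                    mul_le_mul_of_nonneg_left hm (mul_nonneg hA0 h5) |>.trans_eq rfl |> (fun h => by nlinarith [mul_nonneg hA0 h5])
  -- interaction bound
  have hintb : |interaction u1 u2 u3|
      ≤ Real.sqrt (2 * Real.sqrt B) * (kinetic u1) ^ ((1:ℝ)/4) * B := by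
    have hM1 := massSq_nonneg u1
    have hK1 := kinetic_nonneg u1
    have h0 := interaction_le h1 h2 h3
    have e1 : Real.sqrt (2 * (Real.sqrt (massSq u1) * Real.sqrt (kinetic u1)))
        ≤ Real.sqrt ((2 * Real.sqrt B) * Real.sqrt (kinetic u1)) := by
      refine Real.sqrt_le_sqrt ?_
      have := Real.sqrt_le_sqrt hm1
      nlinarith [Real.sqrt_nonneg (kinetic u1), Real.sqrt_nonneg (massSq u1)]
    have e2 : Real.sqrt ((2 * Real.sqrt B) * Real.sqrt (kinetic u1))
        = Real.sqrt (2 * Real.sqrt B) * (kinetic u1) ^ ((1:ℝ)/4) := by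
      rw [Real.sqrt_mul (by positivity)]
      congr 1
      rw [Real.sqrt_eq_rpow, Real.sqrt_eq_rpow, ← Real.rpow_mul hK1]
      norm_num
    have e3 : Real.sqrt (massSq u2) * Real.sqrt (massSq u3) ≤ B := by
      have h2' := Real.sqrt_le_sqrt hm2
      have h3' := Real.sqrt_le_sqrt hm3
      have h4 : Real.sqrt (massSq u2) * Real.sqrt (massSq u3)
          ≤ Real.sqrt B * Real.sqrt B := by
        apply mul_le_mul h2' h3' (Real.sqrt_nonneg _) (Real.sqrt_nonneg _)
      rwa [Real.mul_self_sqrt hB] at h4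
    calc |interaction u1 u2 u3|
        ≤ Real.sqrt (2 * (Real.sqrt (massSq u1) * Real.sqrt (kinetic u1)))
            * (Real.sqrt (massSq u2) * Real.sqrt (massSq u3)) := h0
      _ ≤ (Real.sqrt (2 * Real.sqrt B) * (kinetic u1) ^ ((1:ℝ)/4)) * B := by
          have hnn1 : (0:ℝ) ≤ Real.sqrt (massSq u2) * Real.sqrt (massSq u3) := by positivity
          have hnn2 : (0:ℝ) ≤ Real.sqrt (2 * (Real.sqrt (massSq u1) * Real.sqrt (kinetic u1))) :=
            Real.sqrt_nonneg _
          have := e1.trans_eq e2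
          nlinarith
      _ = _ := by ring
  -- put it together
  have hK1 := kinetic_nonneg u1
  have hK2 := kinetic_nonneg u2
  have hK3 := kinetic_nonneg u3
  have hp1b : ∀ u : ℝ → ℂ, InH1 u → massSq u ≤ B →
      β / (p + 1) * potential p u ≤ kinetic u / 8 + c1 := by
    intro u hu hm
    have h0 := hpotb u hu hm
    have h5 : β / (p + 1) * potential p u ≤ C1 * (kinetic u) ^ θ := by
      have h6 : β / (p + 1) * potential p u ≤ β / (p + 1) * (A * (kinetic u) ^ θ * B) :=
        mul_le_mul_of_nonneg_left h0 (by positivity)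
      calc β / (p + 1) * potential p u ≤ β / (p + 1) * (A * (kinetic u) ^ θ * B) := h6
        _ = C1 * (kinetic u) ^ θ := by rw [hC1]; ring
    have h7 := hc1 (kinetic u) (kinetic_nonneg u)
    linarith
  have hpe1 := hp1b u1 h1 hm1
  have hpe2 := hp1b u2 h2 hm2
  have hpe3 := hp1b u3 h3 hm3
  have hie : α * interaction u1 u2 u3 ≤ kinetic u1 / 8 + c2 := by
    have h0 : α * |interaction u1 u2 u3| ≤ C2 * (kinetic u1) ^ ((1:ℝ)/4) := by
      calc α * |interaction u1 u2 u3|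
          ≤ α * (Real.sqrt (2 * Real.sqrt B) * (kinetic u1) ^ ((1:ℝ)/4) * B) :=
            mul_le_mul_of_nonneg_left hintb hα.le
        _ = C2 * (kinetic u1) ^ ((1:ℝ)/4) := by rw [hC2]; ring
    have h7 := hc2 (kinetic u1) hK1
    have h8 : α * |interaction u1 u2 u3| ≤ kinetic u1 / 8 + c2 := by linarith
    have h9 : interaction u1 u2 u3 ≤ |interaction u1 u2 u3| := le_abs_self _
    have h10 := mul_le_mul_of_nonneg_left h9 hα.le
    linarith
  unfold energy
  linarith

theorem Jinf_finite_and_minimizing_sequences_bounded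
    (p α β γ μ : ℝ) (hp : 1 < p) (hp5 : p < 5) (hα : 0 < α) (hβ : 0 < β)
    (hγ : 0 < γ) (hμ : 0 < μ) :
    BddBelow (JconstraintSet p α β γ μ) ∧
    ∀ u1 u2 u3 : ℕ → ℝ → ℂ, JMinimizingSeq p α β γ μ u1 u2 u3 →
      ∃ C : ℝ, ∀ n, H1normSq (u1 n) + H1normSq (u2 n) + H1normSq (u3 n) ≤ C := by
  constructor
  · have hB0 : (0:ℝ) ≤ max γ μ := le_trans hγ.le (le_max_left _ _)
    obtain ⟨C, hC0, hC⟩ := energy_lower hp hp5 hα hβ (max γ μ) hB0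
    refine ⟨-C, fun e he => ?_⟩
    obtain ⟨u1, u2, u3, h1, h2, h3, hq1, hq2, hee⟩ := he
    have hm1 : massSq u1 ≤ max γ μ :=
      le_trans (by linarith [massSq_nonneg u3]) (le_max_left γ μ)
    have hm3 : massSq u3 ≤ max γ μ :=
      le_trans (by linarith [massSq_nonneg u1]) (le_max_left γ μ)
    have hm2 : massSq u2 ≤ max γ μ :=
      le_trans (by linarith [massSq_nonneg u3]) (le_max_right γ μ)
    have h := hC u1 u2 u3 h1 h2 h3 hm1 hm2 hm3
    rw [hee]
    linarith [kinetic_nonneg u1, kinetic_nonneg u2, kinetic_nonneg u3]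
  · intro u1 u2 u3 hmin
    obtain ⟨hin, hm1, hm2, hE⟩ := hmin
    obtain ⟨B1, hB1⟩ := hm1.bddAbove_range
    obtain ⟨B2, hB2⟩ := hm2.bddAbove_range
    obtain ⟨E0, hE0⟩ := hE.bddAbove_range
    set B := max 0 (max B1 B2) with hBdef
    have hBnn : (0:ℝ) ≤ B := le_max_left _ _
    have hB1B : B1 ≤ B := le_trans (le_max_left _ _) (le_max_right _ _)
    have hB2B : B2 ≤ B := le_trans (le_max_right _ _) (le_max_right _ _)
    have hBm : ∀ n, massSq (u1 n) ≤ B ∧ massSq (u2 n) ≤ B ∧ massSq (u3 n) ≤ B := by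
      intro n
      have h1 : massSq (u1 n) + massSq (u3 n) ≤ B1 := hB1 ⟨n, rfl⟩
      have h2 : massSq (u2 n) + massSq (u3 n) ≤ B2 := hB2 ⟨n, rfl⟩
      have n1 := massSq_nonneg (u1 n)
      have n2 := massSq_nonneg (u2 n)
      have n3 := massSq_nonneg (u3 n)
      exact ⟨by linarith, by linarith, by linarith⟩
    obtain ⟨C, hC0, hC⟩ := energy_lower hp hp5 hα hβ B hBnn
    refine ⟨3 * B + 4 * (E0 + C), fun n => ?_⟩
    have h := hC (u1 n) (u2 n) (u3 n) (hin n).1 (hin n).2.1 (hin n).2.2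
      (hBm n).1 (hBm n).2.1 (hBm n).2.2
    have hEn : energy p α β (u1 n) (u2 n) (u3 n) ≤ E0 := hE0 ⟨n, rfl⟩
    have := (hBm n).1
    have := (hBm n).2.1
    have := (hBm n).2.2
    unfold H1normSq
    linarith

end
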